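/- Let L be a Lindblad generator on n×n complex matrices and suppose there is a density matrix ρ̄ and constants C, λ > 0 such that ‖e^{tL}(X) − tr(X)ρ̄‖ ≤ C e^{−λt}‖X‖ for every matrix X and every t ≥ 0. Then for every matrix W with tr(W) = 0: (i) the integral ∫₀^∞ e^{tL}(W) dt converges absolutely; (ii) a matrix X satisfies −L(X) = W if and only if X = ∫₀^∞ e^{tL}(W) dt + λρ̄ for some λ ∈ ℂ; (iii) X = ∫₀^∞ e^{tL}(W) dt is the unique traceless solution of −L(X) = W. -/

import Mathlib

open scoped Matrix MeasureTheory ComplexOrder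

set_option maxHeartbeats 1000000
set_option synthInstance.maxHeartbeats 400000

attribute [local instance] Matrix.frobeniusNormedAddCommGroup Matrix.frobeniusNormedSpace

/-- Port aid: the topology induced by the Frobenius norm (equal to the product topology). -/
noncomputable abbrev frobeniusTopology {n : ℕ} : TopologicalSpace (Matrix (Fin n) (Fin n) ℂ) :=
  Matrix.frobeniusNormedAddCommGroup.toUniformSpace.toTopologicalSpace

attribute [local instance] frobeniusTopology

/-- The dissipator `D_X(ρ) = XρX† − (1/2)(X†Xρ + ρX†X)`. -/
noncomputable def dissipator {n : ℕ} (X ρ : Matrix (Fin n) (Fin n) ℂ) :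
    Matrix (Fin n) (Fin n) ℂ :=
  X * ρ * Xᴴ - (1 / 2 : ℂ) • (Xᴴ * X * ρ + ρ * (Xᴴ * X))

/-- A map on `n×n` matrices is a Lindblad generator if it has the form
`ρ ↦ −i[H,ρ] + Σ_μ D_{L_μ}(ρ)` with `H` Hermitian. -/
def IsLindblad {n : ℕ} (L : Matrix (Fin n) (Fin n) ℂ → Matrix (Fin n) (Fin n) ℂ) : Prop :=
  ∃ H : Matrix (Fin n) (Fin n) ℂ, H.IsHermitian ∧
    ∃ (m : ℕ) (Lop : Fin m → Matrix (Fin n) (Fin n) ℂ),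
      ∀ ρ, L ρ = (-Complex.I) • (H * ρ - ρ * H) + ∑ μ, dissipator (Lop μ) ρ

theorem trace_dissipator {n : ℕ} (A X : Matrix (Fin n) (Fin n) ℂ) :
    (dissipator A X).trace = 0 := by
  simp only [dissipator, Matrix.trace_sub, Matrix.trace_smul, Matrix.trace_add, smul_eq_mul]
  rw [Matrix.trace_mul_cycle, Matrix.trace_mul_comm X (Aᴴ * A)]
  ring

theorem trace_lindblad {n : ℕ} {L : Matrix (Fin n) (Fin n) ℂ → Matrix (Fin n) (Fin n) ℂ}
    (hL : IsLindblad L) (X : Matrix (Fin n) (Fin n) ℂ) : (L X).trace = 0 := by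
  obtain ⟨H, -, m, Lop, hrep⟩ := hL
  rw [hrep, Matrix.trace_add, Matrix.trace_smul, Matrix.trace_sub,
    Matrix.trace_mul_comm, sub_self, smul_zero, zero_add, Matrix.trace_sum]
  exact Finset.sum_eq_zero fun μ _ => trace_dissipator _ _

noncomputable def traceCLM (n : ℕ) : Matrix (Fin n) (Fin n) ℂ →L[ℂ] ℂ :=
  LinearMap.toContinuousLinearMap (Matrix.traceLinearMap (Fin n) ℂ ℂ)

@[simp] theorem traceCLM_apply {n : ℕ} (A : Matrix (Fin n) (Fin n) ℂ) :
    traceCLM n A = A.trace := rfl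

theorem clm_comp_hasDerivAt {M M' : Type*} [NormedAddCommGroup M] [NormedSpace ℂ M]
    [NormedAddCommGroup M'] [NormedSpace ℂ M'] (T : M →L[ℂ] M') {f : ℝ → M} {f' : M} {t : ℝ}
    (hf : HasDerivAt f f' t) : HasDerivAt (fun u => T (f u)) (T f') t := by
  exact ((T.hasFDerivAt (x := f t)).restrictScalars ℝ).comp_hasDerivAt t hf

section main
variable {n : ℕ} (L : Matrix (Fin n) (Fin n) ℂ →L[ℂ] Matrix (Fin n) (Fin n) ℂ)

example (t : ℝ) : (t • L) = ((t : ℂ) • L) := (Complex.coe_smul t L).symm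

theorem exp_smul_hasDerivAt (X : Matrix (Fin n) (Fin n) ℂ) (t : ℝ) :
    HasDerivAt (fun u : ℝ => NormedSpace.exp (((u : ℂ)) • L) X)
      (NormedSpace.exp (((t : ℂ)) • L) (L X)) t := by
  have h1 : HasDerivAt (fun z : ℂ => NormedSpace.exp (z • L))
      (NormedSpace.exp (((t : ℂ)) • L) * L) (t : ℂ) := hasDerivAt_exp_smul_const L (t : ℂ)
  have h2 : HasDerivAt (fun u : ℝ => NormedSpace.exp (((u : ℂ)) • L))
      (NormedSpace.exp (((t : ℂ)) • L) * L) t := by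
    have h3 := h1.scomp t Complex.ofRealCLM.hasDerivAt
    simp at h3
    exact h3
  simpa [ContinuousLinearMap.mul_apply] using
    clm_comp_hasDerivAt (ContinuousLinearMap.apply ℂ (Matrix (Fin n) (Fin n) ℂ) X) h2

theorem exp_smul_comm_apply (X : Matrix (Fin n) (Fin n) ℂ) (t : ℂ) :
    NormedSpace.exp (t • L) (L X) = L (NormedSpace.exp (t • L) X) := by
  have hc : Commute (t • L) L := by
    ext Z
    simp [ContinuousLinearMap.mul_apply]
  simpa [ContinuousLinearMap.mul_apply] using
    ContinuousLinearMap.ext_iff.mp hc.exp_left.eq X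

theorem exp_smul_continuous (X : Matrix (Fin n) (Fin n) ℂ) :
    Continuous fun t : ℝ => NormedSpace.exp (((t : ℂ)) • L) X := by
  letI : NormedAlgebra ℚ (Matrix (Fin n) (Fin n) ℂ →L[ℂ] Matrix (Fin n) (Fin n) ℂ) :=
    .restrictScalars ℚ ℂ _
  exact (NormedSpace.exp_continuous.comp (Complex.continuous_ofReal.smul continuous_const)).clm_apply
    continuous_const

end main

open Filter MeasureTheory in
/-- if the Lindblad semigroup `e^{tL}` converges exponentially to
`X ↦ tr(X)ρ̄` for a density matrix `ρ̄`, then for every traceless `W`: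
(i) `∫₀^∞ e^{tL}(W) dt` converges absolutely;
(ii) `−L(X) = W` iff `X = ∫₀^∞ e^{tL}(W) dt + c ρ̄` for some `c ∈ ℂ`;
(iii) `∫₀^∞ e^{tL}(W) dt` is the unique traceless solution of `−L(X) = W`. -/
theorem stmt1 {n : ℕ}
    (L : Matrix (Fin n) (Fin n) ℂ →L[ℂ] Matrix (Fin n) (Fin n) ℂ)
    (hL : IsLindblad (⇑L))
    (ρbar : Matrix (Fin n) (Fin n) ℂ) (hψ : ρbar.PosSemidef) (htrρ : ρbar.trace = 1)
    (C lam : ℝ) (hC : 0 < C) (hlam : 0 < lam)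
    (hconv : ∀ (X : Matrix (Fin n) (Fin n) ℂ) (t : ℝ), 0 ≤ t →
      ‖NormedSpace.exp (t • L) X - X.trace • ρbar‖ ≤ C * Real.exp (-lam * t) * ‖X‖)
    (W : Matrix (Fin n) (Fin n) ℂ) (hW : W.trace = 0) :
    MeasureTheory.IntegrableOn (fun t : ℝ => NormedSpace.exp (t • L) W) (Set.Ioi 0) ∧
    (∀ X : Matrix (Fin n) (Fin n) ℂ,
      -(L X) = W ↔ ∃ c : ℂ,
        X = (∫ t in Set.Ioi (0 : ℝ), NormedSpace.exp (t • L) W) + c • ρbar) ∧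
    (-(L (∫ t in Set.Ioi (0 : ℝ), NormedSpace.exp (t • L) W)) = W ∧
      (∫ t in Set.Ioi (0 : ℝ), NormedSpace.exp (t • L) W).trace = 0 ∧
      ∀ X : Matrix (Fin n) (Fin n) ℂ, -(L X) = W → X.trace = 0 →
        X = ∫ t in Set.Ioi (0 : ℝ), NormedSpace.exp (t • L) W) := by
  have hsm : ∀ t : ℝ, (t • L) = (((t : ℂ)) • L) := fun t => (Complex.coe_smul t L).symm
  simp only [hsm] at hconv ⊢
  have htrL : ∀ X : Matrix (Fin n) (Fin n) ℂ, (L X).trace = 0 := trace_lindblad hL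
  -- generic exponential-decay facts
  have hten : ∀ M : ℝ, Tendsto (fun t : ℝ => M * Real.exp (-lam * t)) atTop (nhds 0) := by
    intro M
    have h1 : Tendsto (fun t : ℝ => -lam * t) atTop atBot :=
      (tendsto_const_mul_atBot_of_neg (neg_lt_zero.mpr hlam)).mpr tendsto_id
    simpa using (Real.tendsto_exp_atBot.comp h1).const_mul M
  have hint_gen : ∀ (g : ℝ → Matrix (Fin n) (Fin n) ℂ) (M : ℝ), Continuous g →
      (∀ t : ℝ, 0 ≤ t → ‖g t‖ ≤ M * Real.exp (-lam * t)) →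
      MeasureTheory.IntegrableOn g (Set.Ioi 0) := by
    intro g M hg hb
    refine MeasureTheory.Integrable.mono'
      ((exp_neg_integrableOn_Ioi 0 hlam).const_mul M) hg.aestronglyMeasurable.restrict ?_
    filter_upwards [MeasureTheory.ae_restrict_mem measurableSet_Ioi] with t ht
    exact hb t ht.le
  have hbW : ∀ X : Matrix (Fin n) (Fin n) ℂ, X.trace = 0 → ∀ t : ℝ, 0 ≤ t →
      ‖NormedSpace.exp (((t : ℂ)) • L) X‖ ≤ (C * ‖X‖) * Real.exp (-lam * t) := by
    intro X hX t ht
    calc ‖NormedSpace.exp (((t : ℂ)) • L) X‖ ≤ C * Real.exp (-lam * t) * ‖X‖ := by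
          simpa [hX] using hconv X t ht
      _ = (C * ‖X‖) * Real.exp (-lam * t) := by ring
  -- the derivative, in the convenient form
  have hda : ∀ (X : Matrix (Fin n) (Fin n) ℂ) (t : ℝ),
      HasDerivAt (fun u : ℝ => NormedSpace.exp (((u : ℂ)) • L) X)
        (L (NormedSpace.exp (((t : ℂ)) • L) X)) t := by
    intro X t
    have := exp_smul_hasDerivAt L X t
    rwa [exp_smul_comm_apply] at this
  -- integrability
  have hint : MeasureTheory.IntegrableOn
      (fun t : ℝ => NormedSpace.exp (((t : ℂ)) • L) W) (Set.Ioi 0) :=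
    hint_gen _ (C * ‖W‖) (exp_smul_continuous L W) (fun t ht => hbW W hW t ht)
  have hintL : MeasureTheory.IntegrableOn
      (fun t : ℝ => L (NormedSpace.exp (((t : ℂ)) • L) W)) (Set.Ioi 0) := by
    refine hint_gen _ (‖L‖ * (C * ‖W‖)) (L.continuous.comp (exp_smul_continuous L W)) ?_
    intro t ht
    calc ‖L (NormedSpace.exp (((t : ℂ)) • L) W)‖
        ≤ ‖L‖ * ‖NormedSpace.exp (((t : ℂ)) • L) W‖ := L.le_opNorm _
      _ ≤ ‖L‖ * ((C * ‖W‖) * Real.exp (-lam * t)) :=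
          mul_le_mul_of_nonneg_left (hbW W hW t ht) (norm_nonneg _)
      _ = (‖L‖ * (C * ‖W‖)) * Real.exp (-lam * t) := by ring
  have htend : Tendsto (fun t : ℝ => NormedSpace.exp (((t : ℂ)) • L) W) atTop (nhds 0) := by
    refine squeeze_zero_norm' ?_ (hten (C * ‖W‖))
    filter_upwards [eventually_ge_atTop 0] with t ht using hbW W hW t ht
  have hzsm : ((0 : ℂ)) • L = 0 := by ext Z; simp
  have hf0 : NormedSpace.exp ((((0:ℝ) : ℂ)) • L) W = W := by
    rw [Complex.ofReal_zero, hzsm, NormedSpace.exp_zero, ContinuousLinearMap.one_apply]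
  have hFTC : ∫ t in Set.Ioi (0:ℝ), L (NormedSpace.exp (((t : ℂ)) • L) W) = 0 - W := by
    have h := MeasureTheory.integral_Ioi_of_hasDerivAt_of_tendsto'
      (fun t _ => hda W t) hintL htend
    rwa [hf0] at h
  have hLY : L (∫ t in Set.Ioi (0:ℝ), NormedSpace.exp (((t : ℂ)) • L) W) = -W := by
    rw [← ContinuousLinearMap.integral_comp_comm L hint, hFTC, zero_sub]
  -- traces
  have htrexp : ∀ (X : Matrix (Fin n) (Fin n) ℂ) (t : ℝ),
      (NormedSpace.exp (((t : ℂ)) • L) X).trace = X.trace := by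
    intro X t
    have hdd : ∀ s : ℝ,
        HasDerivAt (fun u : ℝ => traceCLM n (NormedSpace.exp (((u : ℂ)) • L) X)) 0 s := by
      intro s
      have h := clm_comp_hasDerivAt (traceCLM n) (hda X s)
      simpa [htrL] using h
    have h0 := is_const_of_deriv_eq_zero (fun s => (hdd s).differentiableAt)
      (fun s => (hdd s).deriv) t 0
    simpa [hzsm, NormedSpace.exp_zero, ContinuousLinearMap.one_apply] using h0
  have htrY : (∫ t in Set.Ioi (0:ℝ), NormedSpace.exp (((t : ℂ)) • L) W).trace = 0 := by
    have h1 := ContinuousLinearMap.integral_comp_comm (traceCLM n) hint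
    have h2 : (fun t : ℝ => traceCLM n (NormedSpace.exp (((t : ℂ)) • L) W))
        = fun _ => (0 : ℂ) := by
      funext t; simp [htrexp, hW]
    rw [h2] at h1
    simpa using h1.symm
  -- kernel of L
  have hfix : ∀ X : Matrix (Fin n) (Fin n) ℂ, L X = 0 → ∀ t : ℝ,
      NormedSpace.exp (((t : ℂ)) • L) X = X := by
    intro X hX t
    have hdd : ∀ s : ℝ,
        HasDerivAt (fun u : ℝ => NormedSpace.exp (((u : ℂ)) • L) X) 0 s := by
      intro s
      have := exp_smul_hasDerivAt L X s
      simpa [hX] using this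
    have h0 := is_const_of_deriv_eq_zero (fun s => (hdd s).differentiableAt)
      (fun s => (hdd s).deriv) t 0
    simpa [hzsm, NormedSpace.exp_zero, ContinuousLinearMap.one_apply] using h0
  have hker : ∀ X : Matrix (Fin n) (Fin n) ℂ, L X = 0 → X = X.trace • ρbar := by
    intro X hX
    have h1 : ‖X - X.trace • ρbar‖ ≤ 0 := by
      refine ge_of_tendsto (hten (C * ‖X‖)) ?_
      filter_upwards [eventually_ge_atTop 0] with t ht
      calc ‖X - X.trace • ρbar‖
          = ‖NormedSpace.exp (((t : ℂ)) • L) X - X.trace • ρbar‖ := by rw [hfix X hX t]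
        _ ≤ C * Real.exp (-lam * t) * ‖X‖ := hconv X t ht
        _ = C * ‖X‖ * Real.exp (-lam * t) := by ring
    exact sub_eq_zero.mp (norm_le_zero_iff.mp h1)
  -- ρbar is a fixed point
  have hconvρ : ∀ u : ℝ, 0 ≤ u →
      ‖NormedSpace.exp (((u : ℂ)) • L) ρbar - ρbar‖ ≤ (C * ‖ρbar‖) * Real.exp (-lam * u) := by
    intro u hu
    calc ‖NormedSpace.exp (((u : ℂ)) • L) ρbar - ρbar‖
        ≤ C * Real.exp (-lam * u) * ‖ρbar‖ := by simpa [htrρ] using hconv ρbar u hu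
      _ = (C * ‖ρbar‖) * Real.exp (-lam * u) := by ring
  have hρfix : ∀ s : ℝ, 0 ≤ s → NormedSpace.exp (((s : ℂ)) • L) ρbar = ρbar := by
    intro s hs
    have hM : ‖NormedSpace.exp (((s : ℂ)) • L) ρbar - ρbar‖ ≤ 0 := by
      refine ge_of_tendsto
        (hten (‖NormedSpace.exp (((s : ℂ)) • L)‖ * (C * ‖ρbar‖)
          + (C * ‖ρbar‖) * Real.exp (-lam * s))) ?_
      filter_upwards [eventually_ge_atTop 0] with t ht
      have hadd : NormedSpace.exp ((((s + t : ℝ)) : ℂ) • L)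
          = NormedSpace.exp (((s : ℂ)) • L) * NormedSpace.exp (((t : ℂ)) • L) := by
        rw [Complex.ofReal_add,
          show ((s:ℂ) + (t:ℂ)) • L = (s:ℂ) • L + (t:ℂ) • L by ext Z; simp [add_mul]]
        letI : NormedAlgebra ℚ (Matrix (Fin n) (Fin n) ℂ →L[ℂ] Matrix (Fin n) (Fin n) ℂ) :=
          .restrictScalars ℚ ℂ _
        refine NormedSpace.exp_add_of_commute ?_
        ext Z
        simp [ContinuousLinearMap.mul_apply, mul_left_comm]
      have e1 : NormedSpace.exp (((s : ℂ)) • L) ρbar - ρbar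
          = NormedSpace.exp (((s : ℂ)) • L) (ρbar - NormedSpace.exp (((t : ℂ)) • L) ρbar)
            + (NormedSpace.exp ((((s + t : ℝ)) : ℂ) • L) ρbar - ρbar) := by
        rw [hadd, map_sub]
        simp only [ContinuousLinearMap.mul_apply]
        abel
      calc ‖NormedSpace.exp (((s : ℂ)) • L) ρbar - ρbar‖
          ≤ ‖NormedSpace.exp (((s : ℂ)) • L)
              (ρbar - NormedSpace.exp (((t : ℂ)) • L) ρbar)‖
            + ‖NormedSpace.exp ((((s + t : ℝ)) : ℂ) • L) ρbar - ρbar‖ := by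
            rw [e1]; exact norm_add_le _ _
        _ ≤ ‖NormedSpace.exp (((s : ℂ)) • L)‖ * ((C * ‖ρbar‖) * Real.exp (-lam * t))
            + (C * ‖ρbar‖) * Real.exp (-lam * (s + t)) := by
            refine add_le_add ((ContinuousLinearMap.le_opNorm _ _).trans
              (mul_le_mul_of_nonneg_left (by simpa [norm_sub_rev] using hconvρ t ht)
                (norm_nonneg _))) (hconvρ (s + t) (by linarith))
        _ = (‖NormedSpace.exp (((s : ℂ)) • L)‖ * (C * ‖ρbar‖)
            + (C * ‖ρbar‖) * Real.exp (-lam * s)) * Real.exp (-lam * t) := by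
            rw [show -lam * (s + t) = -lam * s + -lam * t by ring, Real.exp_add]; ring
    exact sub_eq_zero.mp (norm_le_zero_iff.mp hM)
  have hρ0 : L ρbar = 0 := by
    have hd1 : HasDerivAt (fun u : ℝ => NormedSpace.exp (((u : ℂ)) • L) ρbar) (L ρbar) 1 := by
      have := hda ρbar 1
      rwa [hρfix 1 zero_le_one] at this
    have hd2 : HasDerivAt (fun u : ℝ => NormedSpace.exp (((u : ℂ)) • L) ρbar) 0 1 := by
      refine (hasDerivAt_const (1:ℝ) ρbar).congr_of_eventuallyEq ?_
      filter_upwards [Ioi_mem_nhds zero_lt_one] with u hu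
      exact hρfix u hu.le
    exact hd1.unique hd2
  -- assembly
  refine ⟨hint, ?_, ?_, htrY, ?_⟩
  · intro X
    constructor
    · intro hX
      have hLX : L X = -W := by rw [← hX, neg_neg]
      have h1 : L (X - (∫ t in Set.Ioi (0:ℝ), NormedSpace.exp (((t : ℂ)) • L) W)) = 0 := by
        rw [map_sub, hLX, hLY, sub_self]
      exact ⟨_, sub_eq_iff_eq_add'.mp (hker _ h1)⟩
    · rintro ⟨c, rfl⟩
      rw [map_add, ContinuousLinearMap.map_smul, hLY, hρ0, smul_zero, add_zero, neg_neg]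
  · rw [hLY, neg_neg]
  · intro X hX htrX
    have hLX : L X = -W := by rw [← hX, neg_neg]
    have h1 : L (X - (∫ t in Set.Ioi (0:ℝ), NormedSpace.exp (((t : ℂ)) • L) W)) = 0 := by
      rw [map_sub, hLX, hLY, sub_self]
    have h2 := hker _ h1
    rw [Matrix.trace_sub, htrX, htrY, sub_self, zero_smul] at h2
    exact sub_eq_zero.mp h2
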